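/- Let a>0, b>0, c≥0, g0>0 and let f0, f1 be the MTTP vector fields on ℝ⁴. Then the iterated Lie bracket [f1,[f0,f1]] vanishes identically on ℝ⁴. -/

import Mathlib

/-- The drift vector field of the MTTP system on ℝ⁴. -/
noncomputable def mttpF0 (a c g0 : ℝ) : (Fin 4 → ℝ) → (Fin 4 → ℝ) :=
  fun x => ![a * Real.cos (x 2) - c * x 0 * x 1,
             a * Real.sin (x 2) + c * (x 0) ^ 2 - g0,
             x 3 - c * x 0,
             0]

/-- The control vector field of the MTTP system on ℝ⁴. -/
def mttpF1 (b : ℝ) : (Fin 4 → ℝ) → (Fin 4 → ℝ) :=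
  fun _ => ![0, 0, 0, b]

/-- Lie bracket of vector fields on ℝ⁴: [f,g](x) = Dg(x)·f(x) − Df(x)·g(x). -/
noncomputable def lieBracket4 (f g : (Fin 4 → ℝ) → (Fin 4 → ℝ)) :
    (Fin 4 → ℝ) → (Fin 4 → ℝ) :=
  fun x => fderiv ℝ g x (f x) - fderiv ℝ f x (g x)

noncomputable def pr (i : Fin 4) : (Fin 4 → ℝ) →L[ℝ] ℝ := ContinuousLinearMap.proj i

lemma hF0 (a c g0 : ℝ) (x : Fin 4 → ℝ) :
    HasFDerivAt (mttpF0 a c g0)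
      (ContinuousLinearMap.pi
        ![(-(a * Real.sin (x 2))) • pr 2 - (c * x 1) • pr 0 - (c * x 0) • pr 1,
          (a * Real.cos (x 2)) • pr 2 + (2 * c * x 0) • pr 0,
          pr 3 - (c : ℝ) • pr 0,
          0]) x := by
  rw [show mttpF0 a c g0 = fun x i =>
    (![fun x : Fin 4 → ℝ => a * Real.cos (x 2) - c * x 0 * x 1,
       fun x => a * Real.sin (x 2) + c * (x 0) ^ 2 - g0,
       fun x => x 3 - c * x 0,
       fun _ => 0] : Fin 4 → (Fin 4 → ℝ) → ℝ) i x from by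
      funext y i; fin_cases i <;> simp [mttpF0]]
  rw [hasFDerivAt_pi]
  intro i
  fin_cases i <;> simp only [Fin.zero_eta, Fin.mk_one, Matrix.cons_val_zero, Matrix.cons_val_one, Matrix.head_cons,
    Matrix.cons_val_two, Matrix.tail_cons, Matrix.cons_val_three]
  · have h2 : HasFDerivAt (fun y : Fin 4 → ℝ => Real.cos (y 2))
        ((-Real.sin (x 2)) • pr 2) x :=
      (Real.hasDerivAt_cos (x 2)).comp_hasFDerivAt (f := fun y : Fin 4 → ℝ => y 2) x (hasFDerivAt_apply (𝕜 := ℝ) 2 x)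
    have := ((h2.const_mul a).sub
      (((hasFDerivAt_apply 0 x).const_mul c).mul (hasFDerivAt_apply 1 x)))
    convert this using 1
    · rfl
    ext v
    simp [pr, ContinuousLinearMap.proj]
    ring
  · have h2 : HasFDerivAt (fun y : Fin 4 → ℝ => Real.sin (y 2))
        ((Real.cos (x 2)) • pr 2) x :=
      (Real.hasDerivAt_sin (x 2)).comp_hasFDerivAt (f := fun y : Fin 4 → ℝ => y 2) x (hasFDerivAt_apply (𝕜 := ℝ) 2 x)
    simp only [pow_two]
    have := (((h2.const_mul a).add
      (((hasFDerivAt_apply 0 x).mul (hasFDerivAt_apply 0 x)).const_mul c)).sub_const g0)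
    convert this using 1
    · rfl
    ext v
    simp [pr, ContinuousLinearMap.proj]
    ring
  · exact (hasFDerivAt_apply 3 x).sub ((hasFDerivAt_apply 0 x).const_mul c)
  · exact hasFDerivAt_const 0 x

lemma inner_bracket (a b c g0 : ℝ) :
    lieBracket4 (mttpF0 a c g0) (mttpF1 b) = fun _ => ![0, 0, -b, 0] := by
  funext y
  unfold lieBracket4
  rw [show mttpF1 b = fun _ : Fin 4 → ℝ => ![0,0,0,b] from rfl, fderiv_fun_const,
    (hF0 a c g0 y).fderiv]
  funext i
  fin_cases i <;>
    simp [pr, ContinuousLinearMap.proj, ContinuousLinearMap.pi_apply]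

theorem stmt2 (a b c g0 : ℝ) (ha : 0 < a) (hb : 0 < b) (hc : 0 ≤ c) (hg0 : 0 < g0)
    (x : Fin 4 → ℝ) :
    lieBracket4 (mttpF1 b) (lieBracket4 (mttpF0 a c g0) (mttpF1 b)) x = 0 := by
  rw [inner_bracket]
  unfold lieBracket4
  rw [fderiv_fun_const,
    show mttpF1 b = fun _ : Fin 4 → ℝ => ![0,0,0,b] from rfl, fderiv_fun_const]
  simp
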